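/- Let M = (q : M → X) be an upper semicontinuous Banach bundle over a locally compact Hausdorff space X, (m_λ) a net in M and m ∈ M with q(m_λ) → q(m). Then m_λ → m if and only if for every ε > 0 there exists a convergent net (n_λ^ε) in M with q(n_λ^ε) = q(m_λ) such that eventually ‖m_λ − n_λ^ε‖ < ε and ‖m − lim_λ n_λ^ε‖ < ε. -/

import Mathlib

/- Statement 18: In an upper semicontinuous Banach bundle, a net converges to `m` iff its
projections converge and it can be approximated, uniformly up to any `ε > 0`, by convergent
nets living over the same base points. -/

open Filter Topology

variable {X : Type*} [TopologicalSpace X] {E : X → Type*}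
  [∀ x, NormedAddCommGroup (E x)] [∀ x, NormedSpace ℂ (E x)] [∀ x, CompleteSpace (E x)]
  [TopologicalSpace (Σ x, E x)]

/-- An upper semicontinuous Banach bundle: the projection is a continuous open surjection,
the fibres are Banach spaces, the norm is upper semicontinuous, addition and scalar
multiplication are continuous, and the zero-section criterion holds. -/
structure IsUSCBanachBundle (E : X → Type*)
    [∀ x, NormedAddCommGroup (E x)] [∀ x, NormedSpace ℂ (E x)] [∀ x, CompleteSpace (E x)]
    [TopologicalSpace (Σ x, E x)] : Prop where
  cont_proj : Continuous (Sigma.fst : (Σ x, E x) → X)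
  open_proj : IsOpenMap (Sigma.fst : (Σ x, E x) → X)
  usc_norm : UpperSemicontinuous (fun m : Σ x, E x => ‖m.2‖)
  cont_add : Continuous (fun p : {q : (Σ x, E x) × (Σ x, E x) // q.1.1 = q.2.1} =>
    (⟨p.1.1.1, p.1.1.2 + cast (congrArg E p.2).symm p.1.2.2⟩ : Σ x, E x))
  cont_smul : Continuous (fun p : ℂ × (Σ x, E x) => (⟨p.2.1, p.1 • p.2.2⟩ : Σ x, E x))
  zero_criterion : ∀ (F : Filter (Σ x, E x)) (x : X),
    Tendsto (fun m : Σ x, E x => ‖m.2‖) F (𝓝 0) → Tendsto Sigma.fst F (𝓝 x) →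
      F ≤ 𝓝 (⟨x, 0⟩ : Σ x, E x)

set_option linter.unusedSectionVars false

private lemma cast_add_sub {x y : X} (h : x = y) (hab : x = y) (u : E x) (v : E y) :
    (⟨x, u + cast (congrArg E hab).symm (v - cast (congrArg E h) u)⟩ : Σ x, E x) = ⟨y, v⟩ := by
  subst h
  simp

private lemma norm_sub_cast {x y : X} (h : x = y) (h' : y = x) (u : E x) (v : E y) :
    ‖v - cast (congrArg E h) u‖ = ‖u - cast (congrArg E h') v‖ := by
  subst h
  exact norm_sub_rev _ _

private lemma nhds_zero_basis (hE : IsUSCBanachBundle E) (x : X) {W : Set (Σ x, E x)}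
    (hW : W ∈ 𝓝 (⟨x, 0⟩ : Σ x, E x)) :
    ∃ V ∈ 𝓝 x, ∃ ε > (0:ℝ), ∀ b : Σ x, E x, b.1 ∈ V → ‖b.2‖ < ε → b ∈ W := by
  have hle : (Filter.comap Sigma.fst (𝓝 x) ⊓
      Filter.comap (fun b : Σ x, E x => ‖b.2‖) (𝓝 (0:ℝ))) ≤ 𝓝 (⟨x, 0⟩ : Σ x, E x) :=
    hE.zero_criterion _ x (tendsto_comap.mono_left inf_le_right)
      (tendsto_comap.mono_left inf_le_left)
  have hmem := hle hW
  rw [Filter.mem_inf_iff] at hmem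
  obtain ⟨S, hS, T, hT, hST⟩ := hmem
  rw [Filter.mem_comap] at hS hT
  obtain ⟨V, hV, hVS⟩ := hS
  obtain ⟨I, hI, hIT⟩ := hT
  obtain ⟨ε, hε, hball⟩ := Metric.mem_nhds_iff.mp hI
  refine ⟨V, hV, ε, hε, fun b hb1 hb2 => ?_⟩
  rw [hST]
  exact ⟨hVS hb1, hIT (hball (by
    simpa [Metric.mem_ball, Real.dist_eq, abs_of_nonneg (norm_nonneg _)] using hb2))⟩

private lemma add_nhds (hE : IsUSCBanachBundle E) (p q s : Σ x, E x) (h : p.1 = q.1)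
    (hs : s = ⟨p.1, p.2 + cast (congrArg E h).symm q.2⟩)
    {U : Set (Σ x, E x)} (hU : U ∈ 𝓝 s) :
    ∃ U₁ W : Set (Σ x, E x), IsOpen U₁ ∧ IsOpen W ∧ p ∈ U₁ ∧ q ∈ W ∧
      ∀ a ∈ U₁, ∀ b ∈ W, ∀ hab : a.1 = b.1,
        (⟨a.1, a.2 + cast (congrArg E hab).symm b.2⟩ : Σ x, E x) ∈ U := by
  subst hs
  have hc := hE.cont_add.continuousAt
    (x := (⟨(p, q), h⟩ : {q : (Σ x, E x) × (Σ x, E x) // q.1.1 = q.2.1}))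
  have hpre := hc hU
  rw [nhds_subtype_eq_comap, Filter.mem_map, Filter.mem_comap] at hpre
  obtain ⟨S, hS, hSsub⟩ := hpre
  rw [mem_nhds_prod_iff'] at hS
  obtain ⟨U₁, W, hU₁, hpU₁, hW, hqW, hprod⟩ := hS
  refine ⟨U₁, W, hU₁, hW, hpU₁, hqW, fun a ha b hb hab => ?_⟩
  exact hSsub (hprod (Set.mk_mem_prod ha hb) :
    (⟨(a, b), hab⟩ : {q : (Σ x, E x) × (Σ x, E x) // q.1.1 = q.2.1}).1 ∈ S)

/-- **Lemma B.1** (`lem:convergence uscBb:close nets`): being arbitrarily close to convergent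
nets over the same base points implies convergence. -/
theorem tendsto_iff_forall_eps_exists_close_tendsto
    [LocallyCompactSpace X] [T2Space X]
    (hE : IsUSCBanachBundle E)
    {ι : Type*} [Nonempty ι] [Preorder ι] [IsDirected ι (· ≤ ·)]
    (m : ι → Σ x, E x) (M : Σ x, E x)
    (hproj : Tendsto (fun i => (m i).1) atTop (𝓝 M.1)) :
    Tendsto m atTop (𝓝 M) ↔
      ∀ ε > (0 : ℝ), ∃ (n : ι → Σ x, E x) (L : Σ x, E x),
        Tendsto n atTop (𝓝 L) ∧
        ∃ hfib : ∀ i, (n i).1 = (m i).1, ∃ hL : L.1 = M.1,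
          (∀ᶠ i in atTop, ‖(m i).2 - cast (congrArg E (hfib i)) (n i).2‖ < ε) ∧
          ‖M.2 - cast (congrArg E hL) L.2‖ < ε := by
  constructor
  · intro h ε hε
    refine ⟨m, M, h, fun i => rfl, rfl, Filter.Eventually.of_forall fun i => ?_, ?_⟩
    · show ‖(m i).2 - (m i).2‖ < ε
      simpa using hε
    · show ‖M.2 - M.2‖ < ε
      simpa using hε
  · intro h
    refine Filter.tendsto_def.mpr fun U hU => ?_
    -- step 1: continuity of addition at (M, 0) into U
    obtain ⟨U₁, W₁, hU₁o, hW₁o, hMU₁, h0W₁, pred1⟩ :=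
      add_nhds hE M ⟨M.1, 0⟩ M rfl (by show M = ⟨M.1, M.2 + 0⟩; simp) hU
    obtain ⟨V₁, hV₁, ε₁, hε₁, hball1⟩ :=
      nhds_zero_basis hE M.1 (hW₁o.mem_nhds h0W₁)
    -- step 2: continuity of addition at (M, 0) into U₁
    obtain ⟨U₂, W₂, hU₂o, hW₂o, hMU₂, h0W₂, pred2⟩ :=
      add_nhds hE M ⟨M.1, 0⟩ M rfl (by show M = ⟨M.1, M.2 + 0⟩; simp)
        (hU₁o.mem_nhds hMU₁)
    obtain ⟨V₂, hV₂, ε₂, hε₂, hball2⟩ :=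
      nhds_zero_basis hE M.1 (hW₂o.mem_nhds h0W₂)
    obtain ⟨n, L, htend, hfib, hL, hev, hML⟩ := h (min ε₁ ε₂) (lt_min hε₁ hε₂)
    -- L ∈ U₁
    have hLU₁ : L ∈ U₁ := by
      have hb : (⟨L.1, L.2 - cast (congrArg E hL.symm) M.2⟩ : Σ x, E x) ∈ W₂ := by
        refine hball2 _ ?_ ?_
        · show L.1 ∈ V₂
          rw [hL]; exact mem_of_mem_nhds hV₂
        · show ‖L.2 - cast (congrArg E hL.symm) M.2‖ < ε₂
          rw [norm_sub_cast hL.symm hL M.2 L.2]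
          exact lt_of_lt_of_le hML (min_le_right _ _)
      have hsum := pred2 M hMU₂ _ hb hL.symm
      rwa [cast_add_sub hL.symm hL.symm M.2 L.2] at hsum
    -- combine
    have h1 : ∀ᶠ i in atTop, n i ∈ U₁ := htend (hU₁o.mem_nhds hLU₁)
    have h2 : ∀ᶠ i in atTop, (m i).1 ∈ V₁ := hproj hV₁
    filter_upwards [h1, h2, hev] with i hn hm hclose
    have hb : (⟨(m i).1, (m i).2 - cast (congrArg E (hfib i)) (n i).2⟩ : Σ x, E x) ∈ W₁ :=
      hball1 _ hm (lt_of_lt_of_le hclose (min_le_left _ _))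
    have hsum := pred1 (n i) hn _ hb (hfib i)
    rwa [cast_add_sub (hfib i) (hfib i) (n i).2 (m i).2] at hsum
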